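/- The set of irrational α ∈ [0,1) with the following property has full Lebesgue measure: for every ε > 0 there exists δ with 0 < δ < ε and a subsequence (n_k) of indices such that q_{n_k} ‖q_{n_k} α‖ → δ, where q_n are the denominators of the continued fraction convergents of α. -/

import Mathlib

open MeasureTheory Filter Set GenContFract

namespace CFX

/-- the digit of `x` at position `k` (the `k`-th partial denominator, 0-indexed,
    matching `(of x).s.get? k`). -/
noncomputable def dig (x : ℝ) (k : ℕ) : ℤ :=
  ((IntFractPair.stream x (k + 1)).map IntFractPair.b).getD 0

/-- build a number from a list of digits and a tail `s`. -/
noncomputable def mk : List ℤ → ℝ → ℝ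
  | [], s => s
  | a :: w, s => ((a : ℝ) + mk w s)⁻¹

/-- continuants `((P, P'), (Q, Q'))` so that `mk w s = (P + P' s)/(Q + Q' s)`. -/
def cont : List ℤ → (ℤ × ℤ) × (ℤ × ℤ)
  | [] => ((0, 1), (1, 0))
  | a :: w =>
    (((cont w).2.1, (cont w).2.2),
      (a * (cont w).2.1 + (cont w).1.1, a * (cont w).2.2 + (cont w).1.2))

def Pos (w : List ℤ) : Prop := ∀ a ∈ w, 1 ≤ a

lemma mk_mem_Icc {w : List ℤ} (hw : Pos w) {s : ℝ} (hs : s ∈ Icc (0:ℝ) 1) :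
    mk w s ∈ Icc (0:ℝ) 1 := by
  induction w with
  | nil => exact hs
  | cons a w ih =>
    have ha : (1:ℝ) ≤ a := by exact_mod_cast hw a (by simp)
    have hu : mk w s ∈ Icc (0:ℝ) 1 := ih (fun b hb => hw b (by simp [hb]))
    have h1 : (1:ℝ) ≤ (a:ℝ) + mk w s := by linarith [hu.1]
    have h0 : (0:ℝ) < (a:ℝ) + mk w s := by linarith
    constructor
    · simp only [mk]; positivity
    · simp only [mk]
      rw [inv_le_one_iff₀]
      right; exact h1

lemma mk_mem_Ioo {w : List ℤ} (hw : Pos w) {s : ℝ} (hs : s ∈ Ioo (0:ℝ) 1) :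
    mk w s ∈ Ioo (0:ℝ) 1 := by
  induction w with
  | nil => exact hs
  | cons a w ih =>
    have ha : (1:ℝ) ≤ a := by exact_mod_cast hw a (by simp)
    have hu : mk w s ∈ Ioo (0:ℝ) 1 := ih (fun b hb => hw b (by simp [hb]))
    have h1 : (1:ℝ) < (a:ℝ) + mk w s := by linarith [hu.1]
    have h0 : (0:ℝ) < (a:ℝ) + mk w s := by linarith
    constructor
    · simp only [mk]; positivity
    · simp only [mk]
      exact inv_lt_one_of_one_lt₀ h1

lemma mk_irrational {w : List ℤ} {s : ℝ} (hs : Irrational s) : Irrational (mk w s) := by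
  induction w with
  | nil => exact hs
  | cons a w ih =>
    simp only [mk]
    exact ((irrational_intCast_add_iff).2 ih).inv

lemma mk_append (w₁ w₂ : List ℤ) (s : ℝ) : mk (w₁ ++ w₂) s = mk w₁ (mk w₂ s) := by
  induction w₁ with
  | nil => rfl
  | cons a w ih => simp [mk, ih]

/-- all the invariants of the continuants we need, bundled. -/
lemma cont_inv {w : List ℤ} (hw : Pos w) :
    0 ≤ (cont w).1.1 ∧ 0 ≤ (cont w).1.2 ∧ 1 ≤ (cont w).2.1 ∧ 0 ≤ (cont w).2.2 ∧
      (cont w).2.2 ≤ (cont w).2.1 ∧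
      (cont w).1.2 + (cont w).2.2 ≤ (cont w).1.1 + (cont w).2.1 ∧
      1 ≤ (cont w).1.1 + (cont w).1.2 ∧
      (w.length : ℤ) + 1 ≤ (cont w).2.1 + (cont w).2.2 := by
  induction w with
  | nil => simp [cont]
  | cons a w ih =>
    have ha : (1:ℤ) ≤ a := hw a (by simp)
    obtain ⟨hP, hP', hQ, hQ', hQ'Q, hmix, hPP', hlen⟩ := ih (fun b hb => hw b (by simp [hb]))
    simp only [cont, List.length_cons]
    push_cast
    refine ⟨by nlinarith, by nlinarith, by nlinarith, by nlinarith, by nlinarith,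
      by nlinarith, by nlinarith, by nlinarith⟩

lemma cont_det {w : List ℤ} :
    (cont w).1.1 * (cont w).2.2 - (cont w).1.2 * (cont w).2.1 = (-1) ^ (w.length + 1) := by
  induction w with
  | nil => simp [cont]
  | cons a w ih =>
    simp only [cont, List.length_cons]
    ring_nf
    ring_nf at ih
    nlinarith [ih]


/-! ### Möbius formula -/

lemma denom_pos {w : List ℤ} (hw : Pos w) {s : ℝ} (hs : s ∈ Icc (0:ℝ) 1) :
    0 < ((cont w).2.1 : ℝ) + ((cont w).2.2 : ℝ) * s := by
  obtain ⟨-, -, hQ, hQ', -, -, -, -⟩ := cont_inv hw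
  have h1 : (1:ℝ) ≤ ((cont w).2.1 : ℝ) := by exact_mod_cast hQ
  have h2 : (0:ℝ) ≤ ((cont w).2.2 : ℝ) := by exact_mod_cast hQ'
  nlinarith [hs.1]

lemma mk_formula {w : List ℤ} (hw : Pos w) {s : ℝ} (hs : s ∈ Icc (0:ℝ) 1) :
    (((cont w).2.1 : ℝ) + ((cont w).2.2 : ℝ) * s) * mk w s
      = ((cont w).1.1 : ℝ) + ((cont w).1.2 : ℝ) * s := by
  induction w with
  | nil => simp [cont, mk]
  | cons a w ih =>
    have ha : (1:ℝ) ≤ (a:ℝ) := by exact_mod_cast hw a (by simp)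
    have hw' : Pos w := fun b hb => hw b (by simp [hb])
    have hu : mk w s ∈ Icc (0:ℝ) 1 := mk_mem_Icc hw' hs
    have hau : (0:ℝ) < (a:ℝ) + mk w s := by linarith [hu.1]
    have IH := ih hw'
    simp only [mk, cont]
    push_cast
    rw [mul_inv_eq_iff_eq_mul₀ (by linarith)]
    ring_nf
    nlinarith [IH]

lemma mk_eq_div {w : List ℤ} (hw : Pos w) {s : ℝ} (hs : s ∈ Icc (0:ℝ) 1) :
    mk w s = (((cont w).1.1 : ℝ) + ((cont w).1.2 : ℝ) * s)
      / (((cont w).2.1 : ℝ) + ((cont w).2.2 : ℝ) * s) := by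
  rw [eq_div_iff (denom_pos hw hs).ne', mul_comm, mk_formula hw hs]

lemma mk_sub {w : List ℤ} (hw : Pos w) {s t : ℝ} (hs : s ∈ Icc (0:ℝ) 1)
    (ht : t ∈ Icc (0:ℝ) 1) :
    mk w t - mk w s = ((-1:ℝ) ^ w.length * (t - s))
      / ((((cont w).2.1 : ℝ) + ((cont w).2.2 : ℝ) * s)
          * (((cont w).2.1 : ℝ) + ((cont w).2.2 : ℝ) * t)) := by
  have hDs := denom_pos hw hs
  have hDt := denom_pos hw ht
  have fs := mk_formula hw hs
  have ft := mk_formula hw ht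
  have hdet : ((cont w).1.1 : ℝ) * ((cont w).2.2 : ℝ)
      - ((cont w).1.2 : ℝ) * ((cont w).2.1 : ℝ) = (-1:ℝ) ^ (w.length + 1) := by
    exact_mod_cast congrArg (Int.cast : ℤ → ℝ) cont_det
  rw [eq_div_iff (by positivity)]
  rw [pow_succ] at hdet
  linear_combination ((((cont w).2.1 : ℝ) + ((cont w).2.2 : ℝ) * s)) * ft
    - ((((cont w).2.1 : ℝ) + ((cont w).2.2 : ℝ) * t)) * fs - (t - s) * hdet

lemma mk_sub_abs {w : List ℤ} (hw : Pos w) {s t : ℝ} (hs : s ∈ Icc (0:ℝ) 1)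
    (ht : t ∈ Icc (0:ℝ) 1) (hst : s ≤ t) :
    |mk w t - mk w s| = (t - s)
      / ((((cont w).2.1 : ℝ) + ((cont w).2.2 : ℝ) * s)
          * (((cont w).2.1 : ℝ) + ((cont w).2.2 : ℝ) * t)) := by
  rw [mk_sub hw hs ht, abs_div, abs_mul]
  rw [abs_of_pos (mul_pos (denom_pos hw hs) (denom_pos hw ht))]
  rw [abs_of_nonneg (by linarith : (0:ℝ) ≤ t - s)]
  rcases Nat.even_or_odd w.length with h | h
  · rw [h.neg_one_pow]; simp
  · rw [h.neg_one_pow]; simp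

lemma mk_between {w : List ℤ} (hw : Pos w) {s t u : ℝ} (hs : 0 ≤ s) (h1 : s < u)
    (h2 : u < t) (ht : t ≤ 1) :
    min (mk w s) (mk w t) < mk w u ∧ mk w u < max (mk w s) (mk w t) := by
  have hsI : s ∈ Icc (0:ℝ) 1 := ⟨hs, by linarith⟩
  have htI : t ∈ Icc (0:ℝ) 1 := ⟨by linarith, ht⟩
  have huI : u ∈ Icc (0:ℝ) 1 := ⟨by linarith, by linarith⟩
  have d1 := mk_sub hw hsI huI   -- mk u - mk s
  have d2 := mk_sub hw huI htI   -- mk t - mk u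
  have hDs := denom_pos hw hsI
  have hDt := denom_pos hw htI
  have hDu := denom_pos hw huI
  have q1 : (0:ℝ) < (u - s) / ((((cont w).2.1 : ℝ) + ((cont w).2.2 : ℝ) * s)
      * (((cont w).2.1 : ℝ) + ((cont w).2.2 : ℝ) * u)) :=
    div_pos (by linarith) (mul_pos hDs hDu)
  have q2 : (0:ℝ) < (t - u) / ((((cont w).2.1 : ℝ) + ((cont w).2.2 : ℝ) * u)
      * (((cont w).2.1 : ℝ) + ((cont w).2.2 : ℝ) * t)) :=
    div_pos (by linarith) (mul_pos hDu hDt)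
  rcases Nat.even_or_odd w.length with h | h
  · rw [h.neg_one_pow, one_mul] at d1 d2
    have p1 : 0 < mk w u - mk w s := by rw [d1]; exact q1
    have p2 : 0 < mk w t - mk w u := by rw [d2]; exact q2
    exact ⟨lt_of_le_of_lt (min_le_left _ _) (by linarith),
      lt_of_lt_of_le (by linarith : mk w u < mk w t) (le_max_right _ _)⟩
  · rw [h.neg_one_pow, neg_one_mul] at d1 d2
    have p1 : 0 < mk w s - mk w u := by
      have h' : mk w s - mk w u = (u - s) / ((((cont w).2.1 : ℝ) + ((cont w).2.2 : ℝ) * s)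
          * (((cont w).2.1 : ℝ) + ((cont w).2.2 : ℝ) * u)) := by
        rw [← neg_sub (mk w u), d1, neg_div, neg_neg]
      rw [h']; exact q1
    have p2 : 0 < mk w u - mk w t := by
      have h' : mk w u - mk w t = (t - u) / ((((cont w).2.1 : ℝ) + ((cont w).2.2 : ℝ) * u)
          * (((cont w).2.1 : ℝ) + ((cont w).2.2 : ℝ) * t)) := by
        rw [← neg_sub (mk w t), d2, neg_div, neg_neg]
      rw [h']; exact q2
    exact ⟨lt_of_le_of_lt (min_le_right _ _) (by linarith),
      lt_of_lt_of_le (by linarith : mk w u < mk w s) (le_max_left _ _)⟩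

lemma mk_continuousOn {w : List ℤ} (hw : Pos w) : ContinuousOn (mk w) (Icc (0:ℝ) 1) := by
  induction w with
  | nil => exact continuousOn_id
  | cons a w ih =>
    have ha : (1:ℝ) ≤ (a:ℝ) := by exact_mod_cast hw a (by simp)
    have hw' : Pos w := fun b hb => hw b (by simp [hb])
    show ContinuousOn (fun s => ((a:ℝ) + mk w s)⁻¹) (Icc (0:ℝ) 1)
    refine ContinuousOn.inv₀ (continuousOn_const.add (ih hw')) ?_
    intro x hx
    have := (mk_mem_Icc hw' hx).1
    positivity

lemma mk_rat {w : List ℤ} (q : ℚ) : ∃ r : ℚ, mk w (q:ℝ) = (r:ℝ) := by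
  induction w with
  | nil => exact ⟨q, rfl⟩
  | cons a w ih =>
    obtain ⟨r, hr⟩ := ih
    exact ⟨((a:ℚ) + r)⁻¹, by simp [mk, hr]⟩

/-! ### digit stream of `mk w s` -/

lemma stream_mk {w : List ℤ} (hw : Pos w) {s : ℝ} (hs : s ∈ Ioo (0:ℝ) 1)
    (hirr : Irrational s) (k : ℕ) :
    IntFractPair.stream (mk w s) (k + 1) =
      if h : k < w.length then some ⟨w.get ⟨k, h⟩, mk (w.drop (k + 1)) s⟩
      else IntFractPair.stream s (k + 1 - w.length) := by
  induction w generalizing k with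
  | nil => simp [mk]
  | cons a w ih =>
    have ha : (1:ℝ) ≤ (a:ℝ) := by exact_mod_cast hw a (by simp)
    have hw' : Pos w := fun b hb => hw b (by simp [hb])
    have hu : mk w s ∈ Ioo (0:ℝ) 1 := mk_mem_Ioo hw' hs
    have hv : mk (a :: w) s ∈ Ioo (0:ℝ) 1 := mk_mem_Ioo hw hs
    have hfv : Int.fract (mk (a :: w) s) = mk (a :: w) s :=
      Int.fract_eq_self.2 ⟨hv.1.le, hv.2⟩
    have hfvne : Int.fract (mk (a :: w) s) ≠ 0 := by rw [hfv]; exact hv.1.ne'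
    have hau : (0:ℝ) < (a:ℝ) + mk w s := by linarith [hu.1]
    have hvinv : (Int.fract (mk (a :: w) s))⁻¹ = (a:ℝ) + mk w s := by
      rw [hfv]; show ((((a:ℝ)) + mk w s)⁻¹)⁻¹ = _; rw [inv_inv]
    have hfau : Int.fract ((a:ℝ) + mk w s) = mk w s := by
      rw [Int.fract_intCast_add]; exact Int.fract_eq_self.2 ⟨hu.1.le, hu.2⟩
    rw [IntFractPair.stream_succ hfvne, hvinv]
    cases k with
    | zero =>
      rw [IntFractPair.stream_zero]
      have hfloor : ⌊(a:ℝ) + mk w s⌋ = a := by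
        rw [Int.floor_intCast_add, Int.floor_eq_zero_iff.2 ⟨hu.1.le, hu.2⟩, add_zero]
      simp only [List.length_cons, Nat.zero_lt_succ, dif_pos]
      simp [IntFractPair.of, hfloor, hfau]
    | succ k' =>
      have hfaune : Int.fract ((a:ℝ) + mk w s) ≠ 0 := by rw [hfau]; exact hu.1.ne'
      have hfu : Int.fract (mk w s) = mk w s := Int.fract_eq_self.2 ⟨hu.1.le, hu.2⟩
      have hfune : Int.fract (mk w s) ≠ 0 := by rw [hfu]; exact hu.1.ne'
      rw [IntFractPair.stream_succ hfaune]
      have lhs_eq : IntFractPair.stream (Int.fract ((a:ℝ) + mk w s))⁻¹ k'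
          = IntFractPair.stream (mk w s) (k' + 1) := by
        rw [hfau, IntFractPair.stream_succ hfune, hfu]
      rw [lhs_eq, ih hw' k']
      by_cases h : k' < w.length
      · rw [dif_pos h, dif_pos (by simpa using Nat.succ_lt_succ h)]
        simp
      · rw [dif_neg h, dif_neg (by simp only [List.length_cons]; omega)]
        congr 1
        simp only [List.length_cons]
        omega

lemma dig_mk_lt {w : List ℤ} (hw : Pos w) {s : ℝ} (hs : s ∈ Ioo (0:ℝ) 1)
    (hirr : Irrational s) {k : ℕ} (hk : k < w.length) :
    dig (mk w s) k = w.get ⟨k, hk⟩ := by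
  unfold dig
  rw [stream_mk hw hs hirr k, dif_pos hk]
  rfl

lemma dig_mk_len {w : List ℤ} (hw : Pos w) {s : ℝ} (hs : s ∈ Ioo (0:ℝ) 1)
    (hirr : Irrational s) :
    dig (mk w s) w.length = ⌊s⁻¹⌋ := by
  unfold dig
  rw [stream_mk hw hs hirr w.length, dif_neg (lt_irrefl _)]
  have hfs : Int.fract s = s := Int.fract_eq_self.2 ⟨hs.1.le, hs.2⟩
  have hfsne : Int.fract s ≠ 0 := by rw [hfs]; exact hs.1.ne'
  have : w.length + 1 - w.length = 1 := by omega
  rw [this, IntFractPair.stream_succ hfsne, hfs, IntFractPair.stream_zero]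
  rfl

/-! ### the digit expansion of an irrational `x` -/

noncomputable def digList (x : ℝ) (n : ℕ) : List ℤ := (List.range n).map (dig x)

@[simp] lemma digList_length (x : ℝ) (n : ℕ) : (digList x n).length = n := by
  simp [digList]

lemma irrational_fract {y : ℝ} (hy : Irrational y) : Irrational (Int.fract y) := by
  have : Int.fract y = y - (⌊y⌋ : ℝ) := rfl
  rw [this]
  exact irrational_sub_intCast_iff.2 hy

lemma irrational_ne_zero {y : ℝ} (hy : Irrational y) : y ≠ 0 := by
  intro h
  exact (Rat.not_irrational 0) (by rw [h] at hy; simpa using hy)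

lemma stream_spec {x : ℝ} (hx : Irrational x) (hx01 : x ∈ Ioo (0:ℝ) 1) (n : ℕ) :
    ∃ p : IntFractPair ℝ, IntFractPair.stream x n = some p ∧ p.fr ∈ Ioo (0:ℝ) 1 ∧
      Irrational p.fr ∧ Pos (digList x n) ∧ x = mk (digList x n) p.fr := by
  induction n with
  | zero =>
    refine ⟨IntFractPair.of x, rfl, ?_, ?_, ?_, ?_⟩
    · show Int.fract x ∈ Ioo (0:ℝ) 1
      rw [Int.fract_eq_self.2 ⟨hx01.1.le, hx01.2⟩]; exact hx01
    · show Irrational (Int.fract x); exact irrational_fract hx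
    · intro a ha; simp [digList] at ha
    · show x = mk (digList x 0) (Int.fract x)
      rw [Int.fract_eq_self.2 ⟨hx01.1.le, hx01.2⟩]
      simp [digList, mk]
  | succ n ih =>
    obtain ⟨p, hst, hfr01, hfrirr, hpos, hexp⟩ := ih
    have hfrne : p.fr ≠ 0 := irrational_ne_zero hfrirr
    have hst' : IntFractPair.stream x (n + 1) = some (IntFractPair.of p.fr⁻¹) :=
      IntFractPair.stream_succ_of_some hst hfrne
    have hinv_irr : Irrational p.fr⁻¹ := hfrirr.inv
    have hfr' : (IntFractPair.of p.fr⁻¹).fr = Int.fract p.fr⁻¹ := rfl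
    have hfr'irr : Irrational (IntFractPair.of p.fr⁻¹).fr := by
      rw [hfr']; exact irrational_fract hinv_irr
    have hfr'01 : (IntFractPair.of p.fr⁻¹).fr ∈ Ioo (0:ℝ) 1 := by
      refine ⟨lt_of_le_of_ne ?_ (irrational_ne_zero hfr'irr).symm, ?_⟩
      · rw [hfr']; exact Int.fract_nonneg _
      · rw [hfr']; exact Int.fract_lt_one _
    have hdig : dig x n = ⌊p.fr⁻¹⌋ := by
      unfold dig; rw [hst']; rfl
    have hdigpos : 1 ≤ dig x n := by
      rw [hdig]
      have : (1:ℝ) < p.fr⁻¹ := (one_lt_inv₀ hfr01.1).2 hfr01.2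
      exact Int.le_floor.2 (by exact_mod_cast this.le)
    have hlist : digList x (n + 1) = digList x n ++ [dig x n] := by
      simp [digList, List.range_succ]
    refine ⟨IntFractPair.of p.fr⁻¹, hst', hfr'01, hfr'irr, ?_, ?_⟩
    · intro a ha
      rw [hlist] at ha
      rcases List.mem_append.1 ha with h | h
      · exact hpos a h
      · simp at h; omega
    · have key : mk [dig x n] ((IntFractPair.of p.fr⁻¹).fr) = p.fr := by
        show ((dig x n : ℝ) + mk [] ((IntFractPair.of p.fr⁻¹).fr))⁻¹ = p.fr
        have : mk [] ((IntFractPair.of p.fr⁻¹).fr) = Int.fract p.fr⁻¹ := hfr'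
        rw [this, hdig, Int.floor_add_fract, inv_inv]
      rw [hlist, mk_append, key, ← hexp]

/-! ### the key measure-zero lemma -/

lemma not_irrational_iff {y : ℝ} : ¬ Irrational y ↔ ∃ q : ℚ, y = (q : ℝ) := by
  unfold Irrational
  simp [Set.mem_range, eq_comm]

set_option maxHeartbeats 2000000 in
lemma F_null (m : ℤ) (hm : 1 ≤ m) (N : ℕ) :
    volume {x : ℝ | x ∈ Ioo (0:ℝ) 1 ∧ Irrational x ∧ ∀ k, N ≤ k → dig x k ≠ m} = 0 := by
  set F := {x : ℝ | x ∈ Ioo (0:ℝ) 1 ∧ Irrational x ∧ ∀ k, N ≤ k → dig x k ≠ m} with hFdef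
  by_contra hF
  set F' := toMeasurable volume F with hF'def
  have hmR : (1:ℝ) ≤ (m:ℝ) := by exact_mod_cast hm
  -- density point
  have h1 := Besicovitch.ae_tendsto_measure_inter_div_of_measurableSet volume
    (measurableSet_toMeasurable volume F)
  rw [ae_iff] at h1
  obtain ⟨x, hxF, hxA⟩ := Set.not_subset.1
    (fun hsub => hF (measure_mono_null hsub h1))
  simp only [Set.mem_setOf_eq, not_not] at hxA
  have hxF' : x ∈ F' := subset_toMeasurable volume F hxF
  rw [Set.indicator_of_mem hxF' 1] at hxA
  simp only [Pi.one_apply] at hxA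
  obtain ⟨hx01, hxirr, hxdig⟩ := hxF
  -- the scales
  set Q : ℕ → ℝ := fun n => ((cont (digList x n)).2.1 : ℝ) with hQdef
  set Q' : ℕ → ℝ := fun n => ((cont (digList x n)).2.2 : ℝ) with hQ'def
  set L : ℕ → ℝ := fun n => (Q n * (Q n + Q' n))⁻¹ with hLdef
  have hw : ∀ n, Pos (digList x n) := fun n => (stream_spec hxirr hx01 n).choose_spec.2.2.2.1
  have hQ1 : ∀ n : ℕ, 1 ≤ Q n := by
    intro n
    have := (cont_inv (hw n)).2.2.1
    simp only [hQdef]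
    exact_mod_cast this
  have hQ'0 : ∀ n : ℕ, 0 ≤ Q' n := by
    intro n
    have := (cont_inv (hw n)).2.2.2.1
    simp only [hQ'def]
    exact_mod_cast this
  have hQ'Q : ∀ n : ℕ, Q' n ≤ Q n := by
    intro n
    have := (cont_inv (hw n)).2.2.2.2.1
    simp only [hQdef, hQ'def]
    exact_mod_cast this
  have hQsum : ∀ n : ℕ, (n:ℝ) + 1 ≤ Q n + Q' n := by
    intro n
    have := (cont_inv (hw n)).2.2.2.2.2.2.2
    rw [digList_length] at this
    simp only [hQdef, hQ'def]
    exact_mod_cast this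
  have hLpos : ∀ n : ℕ, 0 < L n := by
    intro n
    have h1 := hQ1 n; have h2 := hQ'0 n
    simp only [hLdef]
    positivity
  have hLle : ∀ n : ℕ, L n ≤ ((n:ℝ) + 1)⁻¹ := by
    intro n
    have h1 := hQ1 n; have h2 := hQ'0 n; have h3 := hQsum n
    simp only [hLdef]
    apply inv_anti₀ (by positivity)
    nlinarith
  have hL0 : Tendsto L atTop (nhds 0) := by
    apply squeeze_zero (fun n => (hLpos n).le) hLle
    have := tendsto_one_div_add_atTop_nhds_zero_nat (𝕜 := ℝ)
    simpa [one_div] using this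
  have hLin : Tendsto L atTop (nhdsWithin 0 (Ioi 0)) :=
    tendsto_nhdsWithin_iff.2 ⟨hL0, Eventually.of_forall (fun n => hLpos n)⟩
  -- ratio sequence
  have hrho : Tendsto (fun n =>
      (volume (F' ∩ Metric.closedBall x (L n)) / volume (Metric.closedBall x (L n))).toReal)
      atTop (nhds 1) := by
    have h2 := (ENNReal.tendsto_toReal ENNReal.one_ne_top).comp (hxA.comp hLin)
    simpa only [Function.comp_def, ENNReal.toReal_one] using h2
  -- the sub-cylinder parameters
  set u1 : ℝ := ((m:ℝ) + 1)⁻¹ with hu1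
  set u2 : ℝ := ((m:ℝ) + 2⁻¹)⁻¹ with hu2
  have hu10 : 0 < u1 := by positivity
  have hu12 : u1 < u2 := by
    rw [hu1, hu2]
    apply inv_strictAnti₀ (by positivity)
    linarith
  have hu21 : u2 < 1 := by
    rw [hu2]
    apply inv_lt_one_of_one_lt₀
    linarith
  have hu1I : u1 ∈ Icc (0:ℝ) 1 := ⟨hu10.le, by linarith⟩
  have hu2I : u2 ∈ Icc (0:ℝ) 1 := ⟨by linarith, hu21.le⟩
  set c : ℝ := (u2 - u1) / 2 with hcdef
  have hc0 : 0 < c := by rw [hcdef]; linarith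
  have hc1 : c ≤ 1 := by
    rw [hcdef]
    have : u2 ≤ 1 := hu21.le
    have : 0 < u1 := hu10
    linarith
  -- main estimate at scale L n for n ≥ N
  have hbound : ∀ n, N ≤ n →
      (volume (F' ∩ Metric.closedBall x (L n)) / volume (Metric.closedBall x (L n))).toReal
        ≤ 1 - c / 2 := by
    intro n hn
    obtain ⟨hst, hfr01, hfrirr, hwp, hexp⟩ := (stream_spec hxirr hx01 n).choose_spec
    set w := digList x n with hwdef
    set fr := ((stream_spec hxirr hx01 n).choose).fr with hfrdef
    -- interval J
    set e0 : ℝ := mk w 0 with he0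
    set e1 : ℝ := mk w 1 with he1
    have hxJ : min e0 e1 < x ∧ x < max e0 e1 := by
      have := mk_between (hw n) (le_refl (0:ℝ)) hfr01.1 hfr01.2 (le_refl (1:ℝ))
      rwa [← hexp] at this
    have hJlen : |e1 - e0| = L n := by
      have h := mk_sub_abs (hw n) (⟨le_refl _, zero_le_one⟩ : (0:ℝ) ∈ Icc (0:ℝ) 1)
        (⟨zero_le_one, le_refl _⟩ : (1:ℝ) ∈ Icc (0:ℝ) 1) zero_le_one
      rw [he1, he0, h]
      simp only [mul_zero, add_zero, mul_one, sub_zero, hLdef, hQdef, hQ'def]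
      rw [one_div]
    -- subinterval S'
    set g1 : ℝ := mk w u1 with hg1
    set g2 : ℝ := mk w u2 with hg2
    have hg1J : min e0 e1 < g1 ∧ g1 < max e0 e1 :=
      mk_between (hw n) (le_refl (0:ℝ)) hu10 (hu12.trans hu21) (le_refl (1:ℝ))
    have hg2J : min e0 e1 < g2 ∧ g2 < max e0 e1 :=
      mk_between (hw n) (le_refl (0:ℝ)) (hu10.trans hu12) hu21 (le_refl (1:ℝ))
    -- S' is inside the closed ball of radius L n around x
    have hball : Ioo (min g1 g2) (max g1 g2) ⊆ Metric.closedBall x (L n) := by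
      intro y hy
      have hy1 : min e0 e1 < y := lt_of_le_of_lt (le_min hg1J.1.le hg2J.1.le) hy.1
      have hy2 : y < max e0 e1 := lt_of_lt_of_le hy.2 (max_le hg1J.2.le hg2J.2.le)
      rw [Metric.mem_closedBall, Real.dist_eq]
      have hmm : max e0 e1 - min e0 e1 ≤ |e1 - e0| := by
        rcases le_total e0 e1 with h | h
        · rw [max_eq_right h, min_eq_left h, abs_of_nonneg (by linarith)]
        · rw [max_eq_left h, min_eq_right h, abs_of_nonpos (by linarith)]; linarith
      rw [hJlen] at hmm
      rw [abs_le]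
      constructor
      · linarith [hxJ.2]
      · linarith [hxJ.1]
    -- irrational points of the subinterval are not in F
    have hnotF : ∀ y, y ∈ Ioo (min g1 g2) (max g1 g2) → Irrational y → y ∉ F := by
      intro y hy hyirr
      have hcont : ContinuousOn (mk w) (Icc u1 u2) :=
        (mk_continuousOn (hw n)).mono (Icc_subset_Icc hu1I.1 hu2I.2)
      have hex : ∃ s', s' ∈ Ioo u1 u2 ∧ mk w s' = y := by
        rcases le_total g1 g2 with h | h
        · rw [min_eq_left h, max_eq_right h] at hy
          obtain ⟨s', hs', hys⟩ := intermediate_value_Ioo hu12.le hcont hy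
          exact ⟨s', hs', hys⟩
        · rw [min_eq_right h, max_eq_left h] at hy
          obtain ⟨s', hs', hys⟩ := intermediate_value_Ioo' hu12.le hcont hy
          exact ⟨s', hs', hys⟩
      obtain ⟨s', hs', hys⟩ := hex
      have hs'irr : Irrational s' := by
        by_contra h
        obtain ⟨q, hq⟩ := not_irrational_iff.1 h
        obtain ⟨r, hr⟩ := mk_rat (w := w) q
        rw [hq, hr] at hys
        exact (not_irrational_iff.2 ⟨r, hys.symm⟩) hyirr
      have hs'01 : s' ∈ Ioo (0:ℝ) 1 := ⟨hu10.trans hs'.1, hs'.2.trans hu21⟩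
      have hs'pos : 0 < s' := hs'01.1
      have hfloor : ⌊s'⁻¹⌋ = m := by
        rw [Int.floor_eq_iff]
        constructor
        · have h2 : s'⁻¹ > u2⁻¹ := inv_strictAnti₀ hs'pos hs'.2
          rw [hu2, inv_inv] at h2
          linarith
        · have h2 : s'⁻¹ < u1⁻¹ := inv_strictAnti₀ hu10 hs'.1
          rw [hu1, inv_inv] at h2
          push_cast
          linarith
      have hdig : dig y n = m := by
        have := dig_mk_len (hw n) hs'01 hs'irr
        rw [hys] at this
        rw [digList_length] at this
        rw [this, hfloor]
      intro hyF
      exact hyF.2.2 n hn hdig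
    -- measure of the subinterval
    set S : Set ℝ := Ioo (min g1 g2) (max g1 g2) ∩ {y | Irrational y} with hSdef
    have hirr_meas : MeasurableSet {y : ℝ | Irrational y} := by
      have : {y : ℝ | Irrational y} = (Set.range ((↑) : ℚ → ℝ))ᶜ := rfl
      rw [this]
      exact (Set.Countable.measurableSet (Set.countable_range _)).compl
    have hSmeas : MeasurableSet S := measurableSet_Ioo.inter hirr_meas
    have hvolIoo : volume (Ioo (min g1 g2) (max g1 g2)) = ENNReal.ofReal (|g2 - g1|) := by
      rw [Real.volume_Ioo]
      congr 1
      rcases le_total g1 g2 with h | h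
      · rw [max_eq_right h, min_eq_left h, abs_of_nonneg (by linarith)]
      · rw [max_eq_left h, min_eq_right h, abs_of_nonpos (by linarith)]; linarith
    have hvolS : volume S = ENNReal.ofReal (|g2 - g1|) := by
      have hQnull : volume (Set.range ((↑) : ℚ → ℝ)) = 0 :=
        (Set.countable_range _).measure_zero _
      apply le_antisymm
      · rw [← hvolIoo]; exact measure_mono Set.inter_subset_left
      · rw [← hvolIoo]
        calc volume (Ioo (min g1 g2) (max g1 g2))
            = volume (Ioo (min g1 g2) (max g1 g2) \ Set.range ((↑) : ℚ → ℝ)) :=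
              (measure_diff_null hQnull).symm
          _ ≤ volume S := by
              apply measure_mono
              intro y hy
              exact ⟨hy.1, hy.2⟩
    -- length of the subinterval
    have hlenS : c * L n ≤ |g2 - g1| := by
      have habs := mk_sub_abs (hw n) hu1I hu2I hu12.le
      rw [← hg1, ← hg2] at habs
      have hQn := hQ1 n; have hQ'n := hQ'0 n; have hQQ := hQ'Q n
      have hD1 : (0:ℝ) < Q n + Q' n * u1 := by nlinarith [mul_nonneg hQ'n hu1I.1]
      have hD2 : (0:ℝ) < Q n + Q' n * u2 := by nlinarith [mul_nonneg hQ'n hu2I.1]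
      have he1 : Q n + Q' n * u1 ≤ Q n + Q' n := by nlinarith [mul_nonneg hQ'n hu1I.1]
      have he2 : Q n + Q' n * u2 ≤ Q n + Q' n := by nlinarith [mul_nonneg hQ'n hu2I.1]
      have hDle : (Q n + Q' n * u1) * (Q n + Q' n * u2) ≤ 2 * (Q n * (Q n + Q' n)) := by
        have h4 : (Q n + Q' n * u1) * (Q n + Q' n * u2) ≤ (Q n + Q' n) * (Q n + Q' n) :=
          mul_le_mul he1 he2 hD2.le (by linarith)
        nlinarith [h4]
      have hstep : (u2 - u1) / (2 * (Q n * (Q n + Q' n)))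
          ≤ (u2 - u1) / ((Q n + Q' n * u1) * (Q n + Q' n * u2)) :=
        div_le_div_of_nonneg_left (by linarith) (mul_pos hD1 hD2) hDle
      have heq : c * L n = (u2 - u1) / (2 * (Q n * (Q n + Q' n))) := by
        rw [hcdef, hLdef]
        have : Q n * (Q n + Q' n) ≠ 0 := by positivity
        field_simp
      rw [heq]
      calc (u2 - u1) / (2 * (Q n * (Q n + Q' n)))
          ≤ (u2 - u1) / ((Q n + Q' n * u1) * (Q n + Q' n * u2)) := hstep
        _ = |g2 - g1| := by rw [habs]
    -- volume estimates
    have hcB : volume (Metric.closedBall x (L n)) = ENNReal.ofReal (2 * L n) := by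
      rw [Real.volume_closedBall]
    have hnum : volume (F' ∩ Metric.closedBall x (L n)) = volume (F ∩ Metric.closedBall x (L n)) :=
      Measure.measure_toMeasurable_inter_of_sFinite measurableSet_closedBall F
    have hSsub : S ⊆ Metric.closedBall x (L n) := fun y hy => hball hy.1
    have hFsub : F ∩ Metric.closedBall x (L n) ⊆ Metric.closedBall x (L n) \ S := by
      intro y hy
      refine ⟨hy.2, fun hyS => ?_⟩
      exact hnotF y hyS.1 hyS.2 hy.1
    have hSfin : volume S ≠ ⊤ := by rw [hvolS]; exact ENNReal.ofReal_ne_top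
    have hnumle : volume (F ∩ Metric.closedBall x (L n))
        ≤ ENNReal.ofReal (2 * L n) - ENNReal.ofReal (c * L n) := by
      calc volume (F ∩ Metric.closedBall x (L n))
          ≤ volume (Metric.closedBall x (L n) \ S) := measure_mono hFsub
        _ = volume (Metric.closedBall x (L n)) - volume S :=
            measure_diff hSsub hSmeas.nullMeasurableSet hSfin
        _ = ENNReal.ofReal (2 * L n) - ENNReal.ofReal (|g2 - g1|) := by rw [hcB, hvolS]
        _ ≤ ENNReal.ofReal (2 * L n) - ENNReal.ofReal (c * L n) :=
            tsub_le_tsub_left (ENNReal.ofReal_le_ofReal hlenS) _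
    -- conclude
    have hLn := hLpos n
    rw [hnum, hcB]
    have hub : volume (F ∩ Metric.closedBall x (L n)) / ENNReal.ofReal (2 * L n)
        ≤ ENNReal.ofReal ((2 * L n - c * L n) / (2 * L n)) := by
      rw [ENNReal.ofReal_div_of_pos (by positivity), ENNReal.ofReal_sub _ (by positivity)]
      exact ENNReal.div_le_div_right hnumle _
    calc (volume (F ∩ Metric.closedBall x (L n)) / ENNReal.ofReal (2 * L n)).toReal
        ≤ (ENNReal.ofReal ((2 * L n - c * L n) / (2 * L n))).toReal :=
          ENNReal.toReal_mono ENNReal.ofReal_ne_top hub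
      _ = (2 * L n - c * L n) / (2 * L n) := by
          rw [ENNReal.toReal_ofReal]
          apply div_nonneg _ (by positivity)
          nlinarith
      _ = 1 - c / 2 := by field_simp
  have hfinal := le_of_tendsto hrho (eventually_atTop.2 ⟨N, hbound⟩)
  linarith

/-! ### Part B : the value of `qₙ‖qₙα‖` when the digit is `m` -/

lemma stream_fr_irrational {v : ℝ} (hv : Irrational v) :
    ∀ (n : ℕ) (p : IntFractPair ℝ), IntFractPair.stream v n = some p → Irrational p.fr := by
  intro n
  induction n with
  | zero =>
    intro p h
    rw [IntFractPair.stream_zero] at h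
    obtain rfl : IntFractPair.of v = p := Option.some_injective _ h
    exact irrational_fract hv
  | succ n ih =>
    intro p h
    obtain ⟨p', hp', hfr, hof⟩ := IntFractPair.succ_nth_stream_eq_some_iff.1 h
    have : Irrational p'.fr := ih p' hp'
    rw [← hof]
    exact irrational_fract this.inv

lemma stream_ne_none {v : ℝ} (hv : Irrational v) (n : ℕ) :
    ∃ p, IntFractPair.stream v n = some p := by
  cases n with
  | zero => exact ⟨IntFractPair.of v, rfl⟩
  | succ n =>
    have hterm : ¬(GenContFract.of v).Terminates := by
      rw [terminates_iff_rat]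
      rintro ⟨q, rfl⟩
      exact (Rat.not_irrational q) hv
    have : ¬(GenContFract.of v).TerminatedAt n := fun h => hterm ⟨n, h⟩
    rw [of_terminatedAt_n_iff_succ_nth_intFractPair_stream_eq_none] at this
    exact Option.ne_none_iff_exists'.1 this

lemma not_terminatedAt {v : ℝ} (hv : Irrational v) (n : ℕ) :
    ¬(GenContFract.of v).TerminatedAt n := by
  intro h
  have hterm : (GenContFract.of v).Terminates := ⟨n, h⟩
  rw [terminates_iff_rat] at hterm
  obtain ⟨q, rfl⟩ := hterm
  exact (Rat.not_irrational q) hv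

lemma contsAux_int (v : ℝ) (n : ℕ) :
    (∃ a b : ℤ, (GenContFract.of v).contsAux n = ⟨(a:ℝ), (b:ℝ)⟩) ∧
      (∃ a b : ℤ, (GenContFract.of v).contsAux (n + 1) = ⟨(a:ℝ), (b:ℝ)⟩) := by
  induction n with
  | zero =>
    constructor
    · exact ⟨1, 0, by simp [zeroth_contAux_eq_one_zero]⟩
    · refine ⟨⌊v⌋, 1, ?_⟩
      rw [first_contAux_eq_h_one, of_h_eq_floor]
      simp
  | succ n ih =>
    refine ⟨ih.2, ?_⟩
    obtain ⟨a0, b0, h0⟩ := ih.1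
    obtain ⟨a1, b1, h1⟩ := ih.2
    cases hs : (GenContFract.of v).s.get? n with
    | none =>
      rw [contsAux_stable_step_of_terminated hs]
      exact ⟨a1, b1, h1⟩
    | some gp =>
      obtain ⟨hgpa, z, hgpb⟩ := of_partNum_eq_one_and_exists_int_partDen_eq hs
      refine ⟨z * a1 + a0, z * b1 + b0, ?_⟩
      rw [contsAux_recurrence hs h0 h1, hgpa, hgpb]
      push_cast
      simp only [GenContFract.Pair.mk.injEq]
      constructor <;> ring

lemma key_bound {α : ℝ} (hα : Irrational α) {j : ℕ} (hj : 1 ≤ j) {m : ℤ} (hm : 1 ≤ m)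
    (hd : dig α j = m) :
    (GenContFract.of α).dens j *
        |(GenContFract.of α).dens j * α - round ((GenContFract.of α).dens j * α)|
      ∈ Icc (((m:ℝ) + 2)⁻¹) ((m:ℝ)⁻¹) := by
  obtain ⟨p, hp⟩ := stream_ne_none hα j
  have hfri : Irrational p.fr := stream_fr_irrational hα j p hp
  have hfr0 : 0 ≤ p.fr := IntFractPair.nth_stream_fr_nonneg hp
  have hfr1 : p.fr < 1 := IntFractPair.nth_stream_fr_lt_one hp
  have hfrne : p.fr ≠ 0 := irrational_ne_zero hfri
  have hfrpos : 0 < p.fr := lt_of_le_of_ne hfr0 (Ne.symm hfrne)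
  have hsucc := IntFractPair.stream_succ_of_some hp hfrne
  have hflr : ⌊p.fr⁻¹⌋ = m := by
    have hdig : dig α j = ⌊p.fr⁻¹⌋ := by unfold dig; rw [hsucc]; rfl
    rw [← hdig, hd]
  have hmle : (m:ℝ) ≤ p.fr⁻¹ := by rw [← hflr]; exact Int.floor_le _
  have hmlt : (m:ℝ) < p.fr⁻¹ := by
    rcases lt_or_eq_of_le hmle with h | h
    · exact h
    · exact absurd h.symm (hfri.inv.ne_int m)
  have hm1 : p.fr⁻¹ < (m:ℝ) + 1 := by
    have h := Int.lt_floor_add_one p.fr⁻¹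
    rwa [hflr] at h
  have hmR : (1:ℝ) ≤ (m:ℝ) := by exact_mod_cast hm
  -- integers for the continuants
  obtain ⟨a, b, hab⟩ := (contsAux_int α (j + 1)).1
  obtain ⟨a', b', hab'⟩ := (contsAux_int α j).1
  -- identify dens with the integer casts
  have hBeq : (GenContFract.of α).dens j = (b : ℝ) := by
    rw [den_eq_conts_b, nth_cont_eq_succ_nth_contAux, hab]
  have hpBeq : (GenContFract.of α).dens (j - 1) = (b' : ℝ) := by
    have hjj : j - 1 + 1 = j := by omega
    rw [den_eq_conts_b, nth_cont_eq_succ_nth_contAux, hjj, hab']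
  -- basic bounds on b, b'
  have hfibB : (1:ℝ) ≤ (b:ℝ) := by
    have h1 := succ_nth_fib_le_of_nth_den (Or.inr (not_terminatedAt hα (j - 1)))
    rw [hBeq] at h1
    have h2 : (1:ℕ) ≤ Nat.fib (j + 1) := Nat.fib_pos.2 (by omega)
    calc (1:ℝ) ≤ (Nat.fib (j+1) : ℝ) := by exact_mod_cast h2
      _ ≤ (b:ℝ) := h1
  have hfibpB : (1:ℝ) ≤ (b':ℝ) := by
    have h1 := succ_nth_fib_le_of_nth_den (v := α) (n := j - 1)
      (Or.inr (not_terminatedAt hα (j - 1 - 1)))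
    rw [hpBeq] at h1
    have h2 : (1:ℕ) ≤ Nat.fib (j - 1 + 1) := Nat.fib_pos.2 (by omega)
    calc (1:ℝ) ≤ (Nat.fib (j - 1 + 1) : ℝ) := by exact_mod_cast h2
      _ ≤ (b':ℝ) := h1
  have hpBB : (b':ℝ) ≤ (b:ℝ) := by
    have h := of_den_mono (v := α) (n := j - 1)
    have hjj : j - 1 + 1 = j := by omega
    rw [hjj, hBeq, hpBeq] at h
    exact h
  have hBpos : (0:ℝ) < (b:ℝ) := by linarith
  -- the error formula
  have herr := sub_convs_eq hp
  simp only [if_neg hfrne] at herr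
  rw [hab, hab'] at herr
  dsimp only at herr
  have hconv : (GenContFract.of α).convs j = (a : ℝ) / (b:ℝ) := by
    rw [conv_eq_num_div_den, num_eq_conts_a, nth_cont_eq_succ_nth_contAux, hab, hBeq]
  rw [hconv] at herr
  -- now `herr : α - a/b = (-1)^j / (b * (fr⁻¹ * b + b'))`
  have hD : (0:ℝ) < p.fr⁻¹ * (b:ℝ) + (b':ℝ) := by nlinarith
  have hDlow : (m:ℝ) * (b:ℝ) + 1 ≤ p.fr⁻¹ * (b:ℝ) + (b':ℝ) := by nlinarith
  have hDhigh : p.fr⁻¹ * (b:ℝ) + (b':ℝ) < ((m:ℝ) + 2) * (b:ℝ) := by nlinarith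
  have hD2 : (2:ℝ) < p.fr⁻¹ * (b:ℝ) + (b':ℝ) := by nlinarith
  -- |bα - a| = 1/(fr⁻¹ b + b')
  have habsval : |(b:ℝ) * α - (a:ℝ)| = ((p.fr⁻¹ * (b:ℝ) + (b':ℝ)))⁻¹ := by
    have hfactor : (b:ℝ) * α - (a:ℝ) = (b:ℝ) * (α - (a:ℝ)/(b:ℝ)) := by
      field_simp
    rw [hfactor, abs_mul, herr, abs_div]
    have h1 : |(-1:ℝ)^j| = 1 := by rw [abs_pow, abs_neg, abs_one, one_pow]
    rw [h1, abs_of_pos hBpos, abs_of_pos (by nlinarith : (0:ℝ) < (b:ℝ) * (p.fr⁻¹ * (b:ℝ) + (b':ℝ)))]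
    rw [one_div, mul_inv, ← mul_assoc, mul_inv_cancel₀ hBpos.ne', one_mul]
  have hhalf : |(b:ℝ) * α - (a:ℝ)| < 1/2 := by
    rw [habsval, show (1:ℝ)/2 = (2:ℝ)⁻¹ from one_div 2]
    exact inv_strictAnti₀ two_pos hD2
  have hround : round ((b:ℝ) * α) = a := by
    rw [round_eq, Int.floor_eq_iff]
    have h2 := abs_lt.1 hhalf
    constructor
    · linarith [h2.1]
    · push_cast
      linarith [h2.2]
  rw [hBeq, hround, habsval]
  have hmb : (0:ℝ) < (m:ℝ) * (b:ℝ) := by nlinarith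
  constructor
  · have hle : (((m:ℝ) + 2) * (b:ℝ))⁻¹ ≤ (p.fr⁻¹ * (b:ℝ) + (b':ℝ))⁻¹ :=
      inv_anti₀ hD hDhigh.le
    calc ((m:ℝ) + 2)⁻¹ = (b:ℝ) * (((m:ℝ) + 2) * (b:ℝ))⁻¹ := by
          rw [mul_inv]
          rw [← mul_assoc, mul_comm (b:ℝ), mul_assoc, mul_inv_cancel₀ hBpos.ne', mul_one]
      _ ≤ (b:ℝ) * (p.fr⁻¹ * (b:ℝ) + (b':ℝ))⁻¹ :=
          mul_le_mul_of_nonneg_left hle hBpos.le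
  · have hle : (p.fr⁻¹ * (b:ℝ) + (b':ℝ))⁻¹ ≤ ((m:ℝ) * (b:ℝ))⁻¹ :=
      inv_anti₀ hmb (by linarith)
    calc (b:ℝ) * (p.fr⁻¹ * (b:ℝ) + (b':ℝ))⁻¹
        ≤ (b:ℝ) * ((m:ℝ) * (b:ℝ))⁻¹ := mul_le_mul_of_nonneg_left hle hBpos.le
      _ = (m:ℝ)⁻¹ := by
          rw [mul_inv]
          rw [← mul_assoc, mul_comm (b:ℝ), mul_assoc, mul_inv_cancel₀ hBpos.ne', mul_one]

/-! ### assembly -/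

lemma ae_good : ∀ᵐ α ∂(volume.restrict (Set.Ioo (0:ℝ) 1)),
    Irrational α ∧ α ∈ Ioo (0:ℝ) 1 ∧
      ∀ m : ℕ, 1 ≤ m → ∀ N : ℕ, ∃ k, N ≤ k ∧ dig α k = (m:ℤ) := by
  have hmem : ∀ᵐ α ∂(volume.restrict (Set.Ioo (0:ℝ) 1)), α ∈ Ioo (0:ℝ) 1 :=
    ae_restrict_mem measurableSet_Ioo
  have hirr : ∀ᵐ α ∂(volume.restrict (Set.Ioo (0:ℝ) 1)), Irrational α := by
    rw [ae_iff]
    apply le_antisymm _ zero_le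
    calc volume.restrict (Set.Ioo (0:ℝ) 1) {a | ¬Irrational a}
        ≤ volume {a | ¬Irrational a} := Measure.restrict_le_self _
      _ = 0 := by
          have : {a : ℝ | ¬Irrational a} = Set.range ((↑) : ℚ → ℝ) := by
            ext y
            simp only [Set.mem_setOf_eq, Set.mem_range]
            rw [not_irrational_iff]
            constructor
            · rintro ⟨q, hq⟩; exact ⟨q, hq.symm⟩
            · rintro ⟨q, hq⟩; exact ⟨q, hq.symm⟩
          rw [this]
          exact (Set.countable_range _).measure_zero _
  have hdig : ∀ᵐ α ∂(volume.restrict (Set.Ioo (0:ℝ) 1)), ∀ m : ℕ, ∀ N : ℕ,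
      ¬(α ∈ Ioo (0:ℝ) 1 ∧ Irrational α ∧ ∀ k, N ≤ k → dig α k ≠ ((m:ℤ) + 1)) := by
    rw [ae_all_iff]
    intro m
    rw [ae_all_iff]
    intro N
    rw [ae_iff]
    apply le_antisymm _ zero_le
    calc volume.restrict (Set.Ioo (0:ℝ) 1) {a | ¬¬(a ∈ Ioo (0:ℝ) 1 ∧ Irrational a ∧
          ∀ k, N ≤ k → dig a k ≠ ((m:ℤ) + 1))}
        ≤ volume {a | a ∈ Ioo (0:ℝ) 1 ∧ Irrational a ∧
            ∀ k, N ≤ k → dig a k ≠ ((m:ℤ) + 1)} := by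
          refine le_trans (Measure.restrict_le_self _) (measure_mono ?_)
          intro y hy
          exact not_not.1 hy
      _ = 0 := F_null ((m:ℤ) + 1) (by omega) N
  filter_upwards [hmem, hirr, hdig] with α h1 h2 h3
  refine ⟨h2, h1, ?_⟩
  intro m hm N
  have h4 := h3 (m - 1) N
  push_neg at h4
  obtain ⟨k, hk, hdk⟩ := h4 h1 h2
  refine ⟨k, hk, ?_⟩
  rw [hdk]
  omega

end CFX

open CFX in
theorem stmt10 :
    ∀ᵐ α ∂(volume.restrict (Set.Ioo (0 : ℝ) 1)),
      Irrational α ∧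
      ∀ ε > (0 : ℝ), ∃ δ : ℝ, 0 < δ ∧ δ < ε ∧
        ∃ n : ℕ → ℕ, StrictMono n ∧
          Tendsto (fun k =>
              (GenContFract.of α).dens (n k) *
                |(GenContFract.of α).dens (n k) * α -
                  round ((GenContFract.of α).dens (n k) * α)|)
            atTop (nhds δ) := by
  filter_upwards [ae_good] with α hα
  obtain ⟨hirr, hmem, hdig⟩ := hα
  refine ⟨hirr, ?_⟩
  intro ε hε
  -- choose M
  obtain ⟨M, hM⟩ := exists_nat_gt (max 1 ε⁻¹)
  have hM1 : 1 ≤ M := by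
    have : (1:ℝ) < M := lt_of_le_of_lt (le_max_left _ _) hM
    exact_mod_cast this.le
  have hMpos : (0:ℝ) < M := by positivity
  have hMε : (M:ℝ)⁻¹ < ε := by
    have h1 : ε⁻¹ < (M:ℝ) := lt_of_le_of_lt (le_max_right _ _) hM
    have h2 : (M:ℝ)⁻¹ < (ε⁻¹)⁻¹ := inv_strictAnti₀ (by positivity) h1
    rwa [inv_inv] at h2
  -- infinitely many positions with digit M
  set K : Set ℕ := {k | 1 ≤ k ∧ dig α k = (M:ℤ)} with hK
  have hKinf : K.Infinite := by
    apply Set.infinite_of_not_bddAbove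
    rintro ⟨B, hB⟩
    obtain ⟨k, hk1, hk2⟩ := hdig M hM1 (max (B + 1) 1)
    have hkK : k ∈ K := ⟨le_trans (le_max_right _ _) hk1, hk2⟩
    have := hB hkK
    have : B + 1 ≤ k := le_trans (le_max_left _ _) hk1
    omega
  -- the sequence of values
  set t : ℕ → ℝ := fun i => (GenContFract.of α).dens i *
    |(GenContFract.of α).dens i * α - round ((GenContFract.of α).dens i * α)| with ht
  have hval : ∀ k ∈ K, t k ∈ Icc (((M:ℝ) + 2)⁻¹) ((M:ℝ)⁻¹) := by
    intro k hk
    have h := key_bound hirr hk.1 (by exact_mod_cast hM1 : (1:ℤ) ≤ (M:ℤ)) hk.2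
    have hcast : (((M:ℤ)):ℝ) = (M:ℝ) := by push_cast; ring
    rwa [hcast] at h
  -- extract subsequence
  have hKinf' : (setOf (· ∈ K)).Infinite := hKinf
  set e : ℕ → ℕ := Nat.nth (· ∈ K) with he
  have hemono : StrictMono e := Nat.nth_strictMono hKinf'
  have hemem : ∀ i, e i ∈ K := fun i => Nat.nth_mem_of_infinite hKinf' i
  have hxmem : ∀ i, t (e i) ∈ Icc (((M:ℝ) + 2)⁻¹) ((M:ℝ)⁻¹) := fun i => hval _ (hemem i)
  obtain ⟨δ, hδmem, φ, hφmono, hφtend⟩ :=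
    isCompact_Icc.tendsto_subseq (x := fun i => t (e i)) hxmem
  refine ⟨δ, ?_, ?_, e ∘ φ, hemono.comp hφmono, ?_⟩
  · have : (0:ℝ) < ((M:ℝ) + 2)⁻¹ := by positivity
    linarith [hδmem.1]
  · exact lt_of_le_of_lt hδmem.2 hMε
  · exact hφtend
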